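/- There is an instance with two agents and weights w_1 = 0.43, w_2 = 0.57 for which no cut point l ∈ [0, 7] of the item interval produces a weighted proportional division into a prefix and suffix: assigning the prefix (0, l] to agent 1 forces l ≤ 1.3 and leaves agent 2 with cost more than 5.7, while assigning it to agent 2 forces l ≤ 1.9 and leaves agent 1 with cost more than 4.3. -/
import Mathlib


open Finset

/-- Cost of the prefix interval `(0, l]` when the seven items (item `j`
occupying `(j, j+1]`) have costs `c`, extended linearly to fractions. -/
noncomputable def prefixCost (c : Fin 7 → ℝ) (l : ℝ) : ℝ :=
  ∑ j : Fin 7, c j * max (min (l - (j : ℕ)) 1) 0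

lemma clamp0 {t : ℝ} (h : t ≤ 0) : max (min t 1) 0 = 0 := by
  rw [max_eq_right]; exact le_trans (min_le_left _ _) h

lemma clamp1 {t : ℝ} (h : 1 ≤ t) : max (min t 1) 0 = 1 := by
  rw [min_eq_right h, max_eq_left]; norm_num

lemma clampm {t : ℝ} (h0 : 0 ≤ t) (h1 : t ≤ 1) : max (min t 1) 0 = t := by
  rw [min_eq_left h1, max_eq_left h0]

lemma expand (c : Fin 7 → ℝ) (l : ℝ) : prefixCost c l =
    c 0 * max (min l 1) 0 + c 1 * max (min (l-1) 1) 0 + c 2 * max (min (l-2) 1) 0 +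
    c 3 * max (min (l-3) 1) 0 + c 4 * max (min (l-4) 1) 0 + c 5 * max (min (l-5) 1) 0 +
    c 6 * max (min (l-6) 1) 0 := by
  simp [prefixCost, Fin.sum_univ_seven, show ((2:Fin 7):ℕ) = 2 from rfl,
    show ((3:Fin 7):ℕ) = 3 from rfl, show ((4:Fin 7):ℕ) = 4 from rfl,
    show ((5:Fin 7):ℕ) = 5 from rfl, show ((6:Fin 7):ℕ) = 6 from rfl]

/-- The two-agent weighted instance (weights `0.43`, `0.57`, costs
`(4,1,1,1,1,1,1)` and `(3,3,1,1,1,1,0)`, both totalling 10, so the weighted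
proportional shares are `4.3` and `5.7`) for which no cut point `l ∈ [0,7]`
produces a weighted proportional prefix/suffix division: giving the prefix
`(0, l]` to agent 1 forces `l ≤ 1.3` and leaves agent 2 with cost more than
`5.7`, while giving it to agent 2 forces `l ≤ 1.9` and leaves agent 1 with cost
more than `4.3`. -/
theorem no_wprop_cut : ∀ l : ℝ, 0 ≤ l → l ≤ 7 →
    (prefixCost ![4, 1, 1, 1, 1, 1, 1] l ≤ 43 / 10 →
      l ≤ 13 / 10 ∧
        57 / 10 <
          prefixCost ![3, 3, 1, 1, 1, 1, 0] 7 - prefixCost ![3, 3, 1, 1, 1, 1, 0] l) ∧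
    (prefixCost ![3, 3, 1, 1, 1, 1, 0] l ≤ 57 / 10 →
      l ≤ 19 / 10 ∧
        43 / 10 <
          prefixCost ![4, 1, 1, 1, 1, 1, 1] 7 - prefixCost ![4, 1, 1, 1, 1, 1, 1] l) := by
  intro l h0 h7
  have e1 := expand ![4, 1, 1, 1, 1, 1, 1] l
  have e2 := expand ![3, 3, 1, 1, 1, 1, 0] l
  have e17 := expand ![4, 1, 1, 1, 1, 1, 1] 7
  have e27 := expand ![3, 3, 1, 1, 1, 1, 0] 7
  simp only [Matrix.cons_val_zero, Matrix.cons_val_one, Matrix.head_cons,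
    Matrix.cons_val_two, Matrix.tail_cons, Matrix.cons_val_three,
    Matrix.cons_val_four, Matrix.cons_val_fin_one,
    show (![4,1,1,1,1,1,1] : Fin 7 → ℝ) 5 = 1 from rfl,
    show (![4,1,1,1,1,1,1] : Fin 7 → ℝ) 6 = 1 from rfl,
    show (![3,3,1,1,1,1,0] : Fin 7 → ℝ) 5 = 1 from rfl,
    show (![3,3,1,1,1,1,0] : Fin 7 → ℝ) 6 = 0 from rfl] at e1 e2 e17 e27
  rw [clamp1 (by norm_num), clamp1 (by norm_num), clamp1 (by norm_num),
    clamp1 (by norm_num), clamp1 (by norm_num), clamp1 (by norm_num),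
    clamp1 (by norm_num)] at e17 e27
  rcases le_or_gt l 1 with hl1 | hl1
  · rw [clampm h0 hl1, clamp0 (by linarith), clamp0 (by linarith), clamp0 (by linarith),
      clamp0 (by linarith), clamp0 (by linarith), clamp0 (by linarith)] at e1 e2
    constructor <;> intro h <;> constructor <;> linarith
  · rcases le_or_gt l 2 with hl2 | hl2
    · rw [clamp1 (by linarith), clampm (by linarith) (by linarith), clamp0 (by linarith),
        clamp0 (by linarith), clamp0 (by linarith), clamp0 (by linarith),
        clamp0 (by linarith)] at e1 e2
      constructor <;> intro h <;> constructor <;> linarith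
    · have k0 : max (min l 1) 0 = 1 := clamp1 (by linarith)
      have k1 : max (min (l-1) 1) 0 = 1 := clamp1 (by linarith)
      have nn : ∀ t : ℝ, (0:ℝ) ≤ max (min t 1) 0 := fun t => le_max_right _ _
      rw [k0, k1] at e1 e2
      constructor <;> intro h
      · exfalso
        have := nn (l-2); have := nn (l-3); have := nn (l-4); have := nn (l-5); have := nn (l-6)
        linarith
      · exfalso
        have := nn (l-2); have := nn (l-3); have := nn (l-4); have := nn (l-5); have := nn (l-6)
        linarith
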